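/- Let A be a totally unimodular m×n matrix and b ∈ ℤ^m an integer vector. If there exists x ∈ ℝ^n with A·x ≤ b (componentwise), and the polyhedron {x : A·x ≤ b} has at least one vertex (e.g., it is pointed), then there exists an integer vector x' ∈ ℤ^n with A·x' ≤ b. In particular, if A contains the rows of −I_n (so the polyhedron is bounded below by 0 and pointed), feasibility over the reals implies feasibility over the integers. -/

import Mathlib

/-- A matrix is totally unimodular if every square submatrix has determinant 0, 1, or −1. -/
def IsTotUnimodular {M N : Type*} (A : Matrix M N ℤ) : Prop :=
  ∀ (k : ℕ) (r : Fin k → M) (c : Fin k → N), Function.Injective r → Function.Injective c →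
    (A.submatrix r c).det ∈ ({-1, 0, 1} : Set ℤ)

/-- Every linear functional on `Fin n → ℝ` is given by a coefficient vector. -/
lemma dual_as_vector {n : ℕ} (f : Module.Dual ℝ (Fin n → ℝ)) :
    ∃ d : Fin n → ℝ, (∀ x, f x = ∑ j, x j * d j) := by
  refine ⟨fun j => f (fun k => if j = k then 1 else 0), fun x => ?_⟩
  rw [LinearMap.pi_apply_eq_sum_univ]
  simp [smul_eq_mul]

/-- If `v` is an extreme point of the polyhedron, the tight rows span `ℝⁿ`. -/
lemma tight_rows_span {m n : ℕ} (A : Matrix (Fin m) (Fin n) ℤ) (b : Fin m → ℤ)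
    (v : Fin n → ℝ)
    (hv : v ∈ Set.extremePoints ℝ {x : Fin n → ℝ | ∀ i, ∑ j, (A i j : ℝ) * x j ≤ (b i : ℝ)}) :
    Submodule.span ℝ ((fun i (j : Fin n) => (A i j : ℝ)) ''
      {i | ∑ j, (A i j : ℝ) * v j = (b i : ℝ)}) = ⊤ := by
  classical
  obtain ⟨hvP, hext⟩ := hv
  simp only [Set.mem_setOf_eq] at hvP
  set Ar : Fin m → (Fin n → ℝ) := fun i (j : Fin n) => (A i j : ℝ) with hAr
  set T : Set (Fin m) := {i | ∑ j, (A i j : ℝ) * v j = (b i : ℝ)} with hT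
  by_contra hne
  have hlt : Submodule.span ℝ (Ar '' T) < ⊤ := lt_top_iff_ne_top.mpr hne
  obtain ⟨f, hf0, hfbot⟩ :=
    Submodule.exists_dual_map_eq_bot_of_lt_top hlt inferInstance
  obtain ⟨d, hd⟩ := dual_as_vector f
  have hd0 : d ≠ 0 := by
    intro h
    apply hf0
    refine LinearMap.ext fun x => ?_
    rw [hd x, h]
    simp
  have hrow0 : ∀ i ∈ T, ∑ j, (A i j : ℝ) * d j = 0 := by
    intro i hi
    have hmem : f (Ar i) ∈ Submodule.map f (Submodule.span ℝ (Ar '' T)) :=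
      Submodule.mem_map_of_mem (Submodule.subset_span (Set.mem_image_of_mem _ hi))
    rw [hfbot, Submodule.mem_bot] at hmem
    rw [hd] at hmem
    exact hmem
  -- choose a step size small enough for all slack rows
  set g : Fin m → ℝ := fun i =>
    if (∑ j, (A i j : ℝ) * v j = (b i : ℝ)) then 1
    else ((b i : ℝ) - ∑ j, (A i j : ℝ) * v j) / (|∑ j, (A i j : ℝ) * d j| + 1) with hg
  set F : Finset ℝ := insert 1 (Finset.univ.image g) with hF
  have hFne : F.Nonempty := ⟨1, Finset.mem_insert_self _ _⟩
  set ε : ℝ := F.min' hFne with hε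
  have hgpos : ∀ i, 0 < g i := by
    intro i
    rw [hg]
    by_cases h : (∑ j, (A i j : ℝ) * v j = (b i : ℝ))
    · simp [h]
    · simp only [h, if_false]
      apply div_pos
      · have := hvP i
        cases lt_or_eq_of_le this with
        | inl hlt => linarith
        | inr heq => exact absurd heq h
      · positivity
  have hε0 : 0 < ε := by
    rw [hε, Finset.lt_min'_iff]
    intro y hy
    rw [hF, Finset.mem_insert] at hy
    rcases hy with rfl | hy
    · norm_num
    · obtain ⟨i, _, rfl⟩ := Finset.mem_image.mp hy
      exact hgpos i
  have hεg : ∀ i, ε ≤ g i := fun i =>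
    Finset.min'_le _ _ (Finset.mem_insert_of_mem (Finset.mem_image_of_mem g (Finset.mem_univ i)))
  -- both perturbations stay in the polyhedron
  have hmem : ∀ σ : ℝ, |σ| ≤ ε →
      (fun j => v j + σ * d j) ∈ {x : Fin n → ℝ | ∀ i, ∑ j, (A i j : ℝ) * x j ≤ (b i : ℝ)} := by
    intro σ hσ i
    have hsum : ∑ j, (A i j : ℝ) * (v j + σ * d j)
        = (∑ j, (A i j : ℝ) * v j) + σ * ∑ j, (A i j : ℝ) * d j := by
      rw [Finset.mul_sum]
      rw [← Finset.sum_add_distrib]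
      congr 1; funext j; ring
    simp only [Set.mem_setOf_eq]
    rw [hsum]
    by_cases h : (∑ j, (A i j : ℝ) * v j = (b i : ℝ))
    · rw [hrow0 i h, mul_zero, add_zero, h]
    · have hslack : 0 < (b i : ℝ) - ∑ j, (A i j : ℝ) * v j := by
        have := hvP i
        cases lt_or_eq_of_le this with
        | inl hlt => linarith
        | inr heq => exact absurd heq h
      have hgi : g i = ((b i : ℝ) - ∑ j, (A i j : ℝ) * v j) / (|∑ j, (A i j : ℝ) * d j| + 1) := by
        rw [hg]; simp [h]
      have key : σ * ∑ j, (A i j : ℝ) * d j ≤ (b i : ℝ) - ∑ j, (A i j : ℝ) * v j := by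
        calc σ * ∑ j, (A i j : ℝ) * d j ≤ |σ * ∑ j, (A i j : ℝ) * d j| := le_abs_self _
          _ = |σ| * |∑ j, (A i j : ℝ) * d j| := abs_mul _ _
          _ ≤ ε * |∑ j, (A i j : ℝ) * d j| := by
              apply mul_le_mul_of_nonneg_right hσ (abs_nonneg _)
          _ ≤ g i * |∑ j, (A i j : ℝ) * d j| := by
              apply mul_le_mul_of_nonneg_right (hεg i) (abs_nonneg _)
          _ ≤ (b i : ℝ) - ∑ j, (A i j : ℝ) * v j := by
              rw [hgi, div_mul_eq_mul_div, div_le_iff₀ (by positivity)]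
              nlinarith [abs_nonneg (∑ j, (A i j : ℝ) * d j), hslack]
      linarith
  have hx1 : (fun j => v j + (-ε) * d j) ∈
      {x : Fin n → ℝ | ∀ i, ∑ j, (A i j : ℝ) * x j ≤ (b i : ℝ)} :=
    hmem (-ε) (by rw [abs_neg, abs_of_pos hε0])
  have hx2 : (fun j => v j + ε * d j) ∈
      {x : Fin n → ℝ | ∀ i, ∑ j, (A i j : ℝ) * x j ≤ (b i : ℝ)} :=
    hmem ε (by rw [abs_of_pos hε0])
  have hseg : v ∈ openSegment ℝ (fun j => v j + (-ε) * d j) (fun j => v j + ε * d j) := by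
    refine ⟨1/2, 1/2, by norm_num, by norm_num, by norm_num, ?_⟩
    funext j
    simp only [Pi.add_apply, Pi.smul_apply, smul_eq_mul]
    ring
  have h2 := hext hx2 hx1 (by rw [openSegment_symm]; exact hseg)
  apply hd0
  funext j
  have := congrFun h2 j
  have hεne : ε ≠ 0 := ne_of_gt hε0
  have : ε * d j = 0 := by linarith
  exact (mul_eq_zero.mp this).resolve_left hεne

/-- **Hoffman–Kruskal instance.** If `A` is totally unimodular, `b` is an integer vector,
the polyhedron `P = {x : Ax ≤ b}` is nonempty (real feasibility) and has at least one
vertex (an extreme point), then there is an integer point `x'` with `A x' ≤ b`. -/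
theorem integer_feasibility_of_TU {m n : ℕ} (A : Matrix (Fin m) (Fin n) ℤ)
    (hA : IsTotUnimodular A) (b : Fin m → ℤ)
    (P : Set (Fin n → ℝ))
    (hP : P = {x : Fin n → ℝ | ∀ i, ∑ j, (A i j : ℝ) * x j ≤ (b i : ℝ)})
    (hfeas : P.Nonempty)
    (hvertex : (Set.extremePoints ℝ P).Nonempty) :
    ∃ x' : Fin n → ℤ, ∀ i, ∑ j, A i j * x' j ≤ b i := by
  subst hP
  obtain ⟨v, hv⟩ := hvertex
  have hvP : ∀ i, ∑ j, (A i j : ℝ) * v j ≤ (b i : ℝ) := hv.1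
  set Ar : Fin m → (Fin n → ℝ) := fun i (j : Fin n) => (A i j : ℝ) with hAr
  set T : Set (Fin m) := {i | ∑ j, (A i j : ℝ) * v j = (b i : ℝ)} with hT
  have hspan : Submodule.span ℝ (Ar '' T) = ⊤ := tight_rows_span A b v hv
  -- extract a linearly independent spanning subset
  obtain ⟨s, hsub, hsspan, hsli⟩ := exists_linearIndependent ℝ (Ar '' T)
  rw [hspan] at hsspan
  have hsfin : s.Finite := ((Set.toFinite T).image Ar).subset hsub
  haveI : Fintype s := hsfin.fintype
  have hbasis : Module.Basis s ℝ (Fin n → ℝ) :=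
    Module.Basis.mk hsli (by rw [Subtype.range_coe]; exact hsspan.ge)
  have hcard : Fintype.card s = n := by
    rw [← Module.finrank_eq_card_basis hbasis, Module.finrank_fin_fun]
  -- choose row indices realizing the elements of s
  have hpick : ∀ w : s, ∃ i : Fin m, i ∈ T ∧ Ar i = (w : Fin n → ℝ) := by
    intro w
    obtain ⟨i, hiT, hiw⟩ := hsub w.2
    exact ⟨i, hiT, hiw⟩
  choose pick hpickT hpickA using hpick
  let e : Fin n ≃ s := (Fintype.equivFinOfCardEq hcard).symm
  set r : Fin n → Fin m := fun k => pick (e k) with hr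
  have hrow : ∀ k, Ar (r k) = ((e k : Fin n → ℝ)) := fun k => hpickA (e k)
  have hrT : ∀ k, r k ∈ T := fun k => hpickT (e k)
  have hrinj : Function.Injective r := by
    intro k l hkl
    apply e.injective
    apply Subtype.val_injective
    rw [← hrow k, ← hrow l, hr] at *
    simp only at hkl ⊢
    rw [hkl]
  -- the square subsystem
  set B : Matrix (Fin n) (Fin n) ℤ := A.submatrix r id with hB
  have hBreal : (B.map (Int.cast : ℤ → ℝ)) = fun k => Ar (r k) := by
    funext k j; simp [hB, Ar]
  have hBli : LinearIndependent ℝ (fun k => (B.map (Int.cast : ℤ → ℝ)) k) := by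
    rw [hBreal]
    simp only [hrow]
    exact hsli.comp e e.injective
  have hBunit : IsUnit (B.map (Int.cast : ℤ → ℝ)) :=
    Matrix.linearIndependent_rows_iff_isUnit.mp hBli
  have hdetB : IsUnit B.det := by
    have h0 : B.det ≠ 0 := by
      intro h
      have : (B.map (Int.cast : ℤ → ℝ)).det = 0 := by
        have h2 := RingHom.map_det (Int.castRingHom ℝ) B
        simp only [RingHom.mapMatrix_apply, Int.coe_castRingHom] at h2
        rw [← h2, h, Int.cast_zero]
      exact ((Matrix.isUnit_iff_isUnit_det _).mp hBunit).ne_zero this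
    have := hA n r id hrinj (fun a b h => h)
    rcases this with h | h | h
    · rw [h]; exact isUnit_one.neg
    · exact absurd h h0
    · rw [h]; exact isUnit_one
  -- the integral solution
  set x' : Fin n → ℤ := B⁻¹.mulVec (fun k => b (r k)) with hx'
  have hBx' : B.mulVec x' = fun k => b (r k) := by
    rw [hx', Matrix.mulVec_mulVec, Matrix.mul_nonsing_inv _ hdetB, Matrix.one_mulVec]
  have hvB : (B.map (Int.cast : ℤ → ℝ)).mulVec v = fun k => (b (r k) : ℝ) := by
    funext k
    have := hrT k
    simp only [T, Set.mem_setOf_eq] at this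
    rw [Matrix.mulVec, dotProduct]
    simpa [hB] using this
  have hx'B : (B.map (Int.cast : ℤ → ℝ)).mulVec (fun j => (x' j : ℝ)) = fun k => (b (r k) : ℝ) := by
    funext k
    have := congrFun hBx' k
    rw [Matrix.mulVec, dotProduct] at this ⊢
    simp only [Matrix.map_apply]
    exact_mod_cast this
  have hveq : v = fun j => (x' j : ℝ) := by
    have hinj := Matrix.mulVec_injective_iff_isUnit.mpr hBunit
    exact hinj (hvB.trans hx'B.symm)
  refine ⟨x', fun i => ?_⟩
  have := hvP i
  rw [hveq] at this
  exact_mod_cast (by push_cast at this ⊢; exact this : ((∑ j, A i j * x' j : ℤ) : ℝ) ≤ (b i : ℝ))
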